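/- Let A, B, C, D ∈ ℝ² with D in the open interior of triangle ABC, and suppose the four points determine at most three distinct angle values in (0,π). Then triangle ABC is equilateral and D is its center (circumcenter = centroid). -/

import Mathlib

open EuclideanGeometry

noncomputable section

abbrev Pt : Type := EuclideanSpace ℝ (Fin 2)

/-- The point (x, y) in the Euclidean plane. -/
def pt (x y : ℝ) : Pt := (WithLp.equiv 2 (Fin 2 → ℝ)).symm ![x, y]

/-- The set of distinct angle values in (0, π) determined by a planar point set. -/
def angleSet (P : Set Pt) : Set ℝ :=
  {θ : ℝ | θ ∈ Set.Ioo 0 Real.pi ∧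
    ∃ x ∈ P, ∃ y ∈ P, ∃ z ∈ P, x ≠ y ∧ y ≠ z ∧ x ≠ z ∧ ∠ x y z = θ}

instance : Fact (Module.finrank ℝ Pt = 2) := ⟨finrank_euclideanSpace_fin⟩
instance : Module.Oriented ℝ Pt (Fin 2) := ⟨Module.Basis.orientation (EuclideanSpace.basisFun (Fin 2) ℝ).toBasis⟩

lemma angle_Ioo_of_sign_one {p₁ p₂ p₃ : Pt} (h : (∡ p₁ p₂ p₃).sign = 1) :
    ∠ p₁ p₂ p₃ ∈ Set.Ioo 0 Real.pi := by
  have hne : (∡ p₁ p₂ p₃) ≠ 0 ∧ (∡ p₁ p₂ p₃) ≠ Real.pi := by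
    rw [← Real.Angle.sign_ne_zero_iff, h]; decide
  have he : (∡ p₁ p₂ p₃ : Real.Angle) = ((∠ p₁ p₂ p₃ : ℝ) : Real.Angle) :=
    oangle_eq_angle_of_sign_eq_one h
  have h0 : ∠ p₁ p₂ p₃ ≠ 0 := fun hh => hne.1 (by rw [he, hh]; norm_cast)
  have hpi : ∠ p₁ p₂ p₃ ≠ Real.pi := fun hh => hne.2 (by rw [he, hh])
  exact ⟨lt_of_le_of_ne (angle_nonneg _ _ _) (Ne.symm h0),
    lt_of_le_of_ne (angle_le_pi _ _ _) hpi⟩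

lemma mem_angleSet {P : Set Pt} {x y z : Pt} (hx : x ∈ P) (hy : y ∈ P) (hz : z ∈ P)
    (h : (∡ x y z).sign = 1) : ∠ x y z ∈ angleSet P := by
  refine ⟨angle_Ioo_of_sign_one h, x, hx, y, hy, z, hz, ?_, ?_, ?_, rfl⟩
  · exact left_ne_of_oangle_sign_eq_one h
  · exact (right_ne_of_oangle_sign_eq_one h).symm
  · exact left_ne_right_of_oangle_sign_eq_one h

lemma add_eq_of_angle_add {x y z : ℝ} (hx : x ∈ Set.Ioo 0 Real.pi) (hy : y ∈ Set.Ioo 0 Real.pi)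
    (hz : z ∈ Set.Ioo 0 Real.pi) (h : ((x : Real.Angle) + (y : Real.Angle)) = (z : ℝ)) :
    x + y = z := by
  rw [← Real.Angle.coe_add, Real.Angle.angle_eq_iff_two_pi_dvd_sub] at h
  obtain ⟨k, hk⟩ := h
  have pi_pos := Real.pi_pos
  have h1 : (k : ℝ) < 1 := by nlinarith [hx.1, hx.2, hy.1, hy.2, hz.1, hz.2]
  have h2 : (-1 : ℝ) < k := by nlinarith [hx.1, hx.2, hy.1, hy.2, hz.1, hz.2]
  have h1' : k < 1 := by exact_mod_cast h1
  have h2' : -1 < k := by exact_mod_cast h2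
  have hk0 : k = 0 := by omega
  rw [hk0] at hk; push_cast at hk; linarith

lemma barycentric {A B C D : Pt} (h : AffineIndependent ℝ ![A, B, C])
    (hD : D ∈ interior (convexHull ℝ ({A, B, C} : Set Pt))) :
    ∃ a b c : ℝ, 0 < a ∧ 0 < b ∧ 0 < c ∧ a + b + c = 1 ∧ D = a • A + b • B + c • C := by
  have htop : affineSpan ℝ (Set.range ![A, B, C]) = ⊤ := by
    rw [h.affineSpan_eq_top_iff_card_eq_finrank_add_one]
    simp [finrank_euclideanSpace_fin]
  let bas : AffineBasis (Fin 3) ℝ Pt := ⟨![A, B, C], h, htop⟩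
  have hrange : Set.range (bas : Fin 3 → Pt) = ({A, B, C} : Set Pt) := by
    show Set.range ![A, B, C] = _
    ext p
    simp [Matrix.range_cons, Matrix.range_empty]
    tauto
  rw [← hrange, bas.interior_convexHull] at hD
  refine ⟨bas.coord 0 D, bas.coord 1 D, bas.coord 2 D, hD 0, hD 1, hD 2, ?_, ?_⟩
  · have := bas.sum_coord_apply_eq_one D
    rw [Fin.sum_univ_three] at this; exact this
  · have := bas.linear_combination_coord_eq_self D
    rw [Fin.sum_univ_three] at this
    exact this.symm

lemma sign_one_of_comb {x y P Q R : Pt} {r₁ r₂ r₃ r₄ : ℝ}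
    (hσ : (Module.Oriented.positiveOrientation.oangle x y).sign = 1)
    (h1 : P - Q = r₁ • x + r₂ • y) (h2 : R - Q = r₃ • x + r₄ • y)
    (hdet : 0 < r₁ * r₄ - r₂ * r₃) : (∡ P Q R).sign = 1 := by
  show (Module.Oriented.positiveOrientation.oangle (P - Q) (R - Q)).sign = 1
  rw [h1, h2, Orientation.oangle_sign_smul_add_smul_smul_add_smul, hσ, mul_one]
  exact sign_pos hdet

lemma norm_eq_of_sq_eq {x y : Pt} (h : ‖x‖^2 = ‖y‖^2) : ‖x‖ = ‖y‖ := by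
  rw [← Real.sqrt_sq (norm_nonneg x), ← Real.sqrt_sq (norm_nonneg y), h]

lemma unique_equidist {A B C : Pt} (h : AffineIndependent ℝ ![A, B, C]) {P Q : Pt}
    (hP1 : dist P A = dist P B) (hP2 : dist P B = dist P C)
    (hQ1 : dist Q A = dist Q B) (hQ2 : dist Q B = dist Q C) : P = Q := by
  let T : Affine.Simplex ℝ Pt 2 := ⟨![A, B, C], h⟩
  have htop : affineSpan ℝ (Set.range T.points) = ⊤ := by
    rw [(T.independent).affineSpan_eq_top_iff_card_eq_finrank_add_one]
    simp [finrank_euclideanSpace_fin]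
  have hmem : ∀ p : Pt, p ∈ affineSpan ℝ (Set.range T.points) := fun p => htop ▸ trivial
  have hP : P = T.circumcenter := T.eq_circumcenter_of_dist_eq (hmem P) (r := dist P A)
    (fun i => by
      fin_cases i
      · exact dist_comm A P
      · exact (dist_comm B P).trans hP1.symm
      · exact (dist_comm C P).trans (hP1.trans hP2).symm)
  have hQ : Q = T.circumcenter := T.eq_circumcenter_of_dist_eq (hmem Q) (r := dist Q A)
    (fun i => by
      fin_cases i
      · exact dist_comm A Q
      · exact (dist_comm B Q).trans hQ1.symm
      · exact (dist_comm C Q).trans (hQ1.trans hQ2).symm)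
  rw [hP, hQ]

set_option maxHeartbeats 1000000 in
lemma centroid_dists {A B C : Pt} (e1 : dist A B = dist B C) (e2 : dist B C = dist C A) :
    dist ((3:ℝ)⁻¹ • (A + B + C)) A = dist ((3:ℝ)⁻¹ • (A + B + C)) B ∧
    dist ((3:ℝ)⁻¹ • (A + B + C)) B = dist ((3:ℝ)⁻¹ • (A + B + C)) C := by
  set G : Pt := (3:ℝ)⁻¹ • (A + B + C) with hG
  set u : Pt := B - A with hu
  set v : Pt := C - A with hv
  have hAB : dist A B = ‖u‖ := by rw [dist_eq_norm, hu, norm_sub_rev]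
  have hBC : dist B C = ‖u - v‖ := by rw [dist_eq_norm]; congr 1; rw [hu, hv]; abel
  have hCA : dist C A = ‖v‖ := by rw [dist_eq_norm]
  have h1 : ‖u‖ = ‖u - v‖ := by rw [← hAB, ← hBC]; exact e1
  have h2 : ‖u - v‖ = ‖v‖ := by rw [← hBC, ← hCA]; exact e2
  have huv : ‖u‖ = ‖v‖ := h1.trans h2
  have hp : ‖u‖^2 = ‖v‖^2 := by rw [huv]
  have hsq : ‖u - v‖^2 = ‖u‖^2 - 2 * inner ℝ u v + ‖v‖^2 := norm_sub_sq_real u v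
  have hd : ‖u - v‖^2 = ‖v‖^2 := by rw [h2]
  have hin : (inner ℝ u v : ℝ) = ‖v‖^2 / 2 := by linarith
  have hGA : G - A = (3:ℝ)⁻¹ • (u + v) := by rw [hG, hu, hv]; module
  have hGB : G - B = (3:ℝ)⁻¹ • (v - (2:ℝ) • u) := by rw [hG, hu, hv]; module
  have hGC : G - C = (3:ℝ)⁻¹ • (u - (2:ℝ) • v) := by rw [hG, hu, hv]; module
  have q1 : ‖u + v‖^2 = ‖u‖^2 + 2 * inner ℝ u v + ‖v‖^2 := norm_add_sq_real u v
  have q2 : ‖v - (2:ℝ) • u‖^2 = ‖v‖^2 - 2 * ((2:ℝ) * inner ℝ v u) + (2 * ‖u‖)^2 := by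
    rw [norm_sub_sq_real, real_inner_smul_right, norm_smul]
    norm_num
  have q3 : ‖u - (2:ℝ) • v‖^2 = ‖u‖^2 - 2 * ((2:ℝ) * inner ℝ u v) + (2 * ‖v‖)^2 := by
    rw [norm_sub_sq_real, real_inner_smul_right, norm_smul]
    norm_num
  have hiuv : (inner ℝ v u : ℝ) = inner ℝ u v := real_inner_comm u v
  have r1 : ‖u + v‖ = ‖v - (2:ℝ) • u‖ := by
    apply norm_eq_of_sq_eq; linarith
  have r2 : ‖v - (2:ℝ) • u‖ = ‖u - (2:ℝ) • v‖ := by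
    apply norm_eq_of_sq_eq; linarith
  constructor
  · rw [dist_eq_norm, dist_eq_norm, hGA, hGB, norm_smul, norm_smul, r1]
  · rw [dist_eq_norm, dist_eq_norm, hGB, hGC, norm_smul, norm_smul, r2]

lemma mem3 {v x y z : ℝ} (h : v ∈ ({x, y, z} : Set ℝ)) : v = x ∨ v = y ∨ v = z := by
  simpa using h

set_option maxHeartbeats 2000000 in
lemma key (A B C D : Pt) (h : AffineIndependent ℝ ![A, B, C])
    (hD : D ∈ interior (convexHull ℝ ({A, B, C} : Set Pt)))
    (hcount : (angleSet {A, B, C, D}).ncard ≤ 3)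
    (hor : (∡ B A C).sign = 1) :
    dist A B = dist B C ∧ dist B C = dist C A ∧ D = (3 : ℝ)⁻¹ • (A + B + C) := by
  obtain ⟨ca, cb, cc, hca, hcb, hcc, hsum, hrep⟩ := barycentric h hD
  obtain rfl : ca = 1 - cb - cc := by linarith
  have hbc : cb + cc < 1 := by linarith
  have hxy : (Module.Oriented.positiveOrientation.oangle (B - A) (C - A)).sign = 1 := hor
  -- vector decompositions in the basis (B - A, C - A)
  have e_BA : B - A = (1:ℝ) • (B - A) + (0:ℝ) • (C - A) := by module
  have e_CA : C - A = (0:ℝ) • (B - A) + (1:ℝ) • (C - A) := by module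
  have e_DA : D - A = cb • (B - A) + cc • (C - A) := by rw [hrep]; module
  have e_AB : A - B = (-1:ℝ) • (B - A) + (0:ℝ) • (C - A) := by module
  have e_CB : C - B = (-1:ℝ) • (B - A) + (1:ℝ) • (C - A) := by module
  have e_DB : D - B = (cb - 1) • (B - A) + cc • (C - A) := by rw [hrep]; module
  have e_AC : A - C = (0:ℝ) • (B - A) + (-1:ℝ) • (C - A) := by module
  have e_BC : B - C = (1:ℝ) • (B - A) + (-1:ℝ) • (C - A) := by module
  have e_DC : D - C = cb • (B - A) + (cc - 1) • (C - A) := by rw [hrep]; module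
  have e_AD : A - D = (-cb) • (B - A) + (-cc) • (C - A) := by rw [hrep]; module
  have e_BD : B - D = (1 - cb) • (B - A) + (-cc) • (C - A) := by rw [hrep]; module
  have e_CD : C - D = (-cb) • (B - A) + (1 - cc) • (C - A) := by rw [hrep]; module
  -- the twelve positively oriented angles
  have s_BAC : (∡ B A C).sign = 1 := hor
  have s_BAD : (∡ B A D).sign = 1 := sign_one_of_comb hxy e_BA e_DA (by nlinarith)
  have s_DAC : (∡ D A C).sign = 1 := sign_one_of_comb hxy e_DA e_CA (by nlinarith)
  have s_CBA : (∡ C B A).sign = 1 := sign_one_of_comb hxy e_CB e_AB (by nlinarith)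
  have s_CBD : (∡ C B D).sign = 1 := sign_one_of_comb hxy e_CB e_DB (by nlinarith)
  have s_DBA : (∡ D B A).sign = 1 := sign_one_of_comb hxy e_DB e_AB (by nlinarith)
  have s_ACB : (∡ A C B).sign = 1 := sign_one_of_comb hxy e_AC e_BC (by nlinarith)
  have s_ACD : (∡ A C D).sign = 1 := sign_one_of_comb hxy e_AC e_DC (by nlinarith)
  have s_DCB : (∡ D C B).sign = 1 := sign_one_of_comb hxy e_DC e_BC (by nlinarith)
  have s_ADB : (∡ A D B).sign = 1 := sign_one_of_comb hxy e_AD e_BD (by nlinarith)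
  have s_BDC : (∡ B D C).sign = 1 := sign_one_of_comb hxy e_BD e_CD (by nlinarith)
  have s_CDA : (∡ C D A).sign = 1 := sign_one_of_comb hxy e_CD e_AD (by nlinarith)
  -- distinctness
  have neBA : B ≠ A := left_ne_of_oangle_sign_eq_one s_BAC
  have neCA : C ≠ A := right_ne_of_oangle_sign_eq_one s_BAC
  have neBC : B ≠ C := left_ne_right_of_oangle_sign_eq_one s_BAC
  have neDA : D ≠ A := right_ne_of_oangle_sign_eq_one s_BAD
  have neDB : D ≠ B := right_ne_of_oangle_sign_eq_one s_CBD
  have neDC : D ≠ C := right_ne_of_oangle_sign_eq_one s_ACD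
  -- angle values
  set a1 := ∠ B A D with ha1def
  set a2 := ∠ D A C with ha2def
  set a0 := ∠ B A C with ha0def
  set b1 := ∠ D B A with hb1def
  set b2 := ∠ C B D with hb2def
  set b0 := ∠ C B A with hb0def
  set c1 := ∠ A C D with hc1def
  set c2 := ∠ D C B with hc2def
  set c0 := ∠ A C B with hc0def
  set dA := ∠ B D C with hdAdef
  set dB := ∠ C D A with hdBdef
  set dC := ∠ A D B with hdCdef
  have Ia1 := angle_Ioo_of_sign_one s_BAD
  have Ia2 := angle_Ioo_of_sign_one s_DAC
  have Ia0 := angle_Ioo_of_sign_one s_BAC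
  have Ib1 := angle_Ioo_of_sign_one s_DBA
  have Ib2 := angle_Ioo_of_sign_one s_CBD
  have Ib0 := angle_Ioo_of_sign_one s_CBA
  have Ic1 := angle_Ioo_of_sign_one s_ACD
  have Ic2 := angle_Ioo_of_sign_one s_DCB
  have Ic0 := angle_Ioo_of_sign_one s_ACB
  have IdA := angle_Ioo_of_sign_one s_BDC
  have IdB := angle_Ioo_of_sign_one s_CDA
  have IdC := angle_Ioo_of_sign_one s_ADB
  -- additivity at the three vertices
  have hA : a1 + a2 = a0 := by
    apply add_eq_of_angle_add Ia1 Ia2 Ia0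
    rw [← oangle_eq_angle_of_sign_eq_one s_BAD, ← oangle_eq_angle_of_sign_eq_one s_DAC,
      ← oangle_eq_angle_of_sign_eq_one s_BAC]
    exact oangle_add neBA neDA neCA
  have hB : b2 + b1 = b0 := by
    apply add_eq_of_angle_add Ib2 Ib1 Ib0
    rw [← oangle_eq_angle_of_sign_eq_one s_CBD, ← oangle_eq_angle_of_sign_eq_one s_DBA,
      ← oangle_eq_angle_of_sign_eq_one s_CBA]
    exact oangle_add (neBC.symm) neDB (neBA.symm)
  have hC : c1 + c2 = c0 := by
    apply add_eq_of_angle_add Ic1 Ic2 Ic0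
    rw [← oangle_eq_angle_of_sign_eq_one s_ACD, ← oangle_eq_angle_of_sign_eq_one s_DCB,
      ← oangle_eq_angle_of_sign_eq_one s_ACB]
    exact oangle_add (neCA.symm) neDC neBC
  -- triangle angle sums
  have T0 : b0 + c0 + a0 = Real.pi := by
    have := angle_add_angle_add_angle_eq_pi (p₁ := A) (p₂ := B) (p₃ := C) neBA
    rwa [angle_comm A B C, angle_comm B C A, angle_comm C A B] at this
  have T1 : b1 + dC + a1 = Real.pi := by
    have := angle_add_angle_add_angle_eq_pi (p₁ := A) (p₂ := B) (p₃ := D) neBA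
    rwa [angle_comm A B D, angle_comm B D A, angle_comm D A B] at this
  have T2 : c2 + dA + b2 = Real.pi := by
    have := angle_add_angle_add_angle_eq_pi (p₁ := B) (p₂ := C) (p₃ := D) neBC.symm
    rwa [angle_comm B C D, angle_comm C D B, angle_comm D B C] at this
  have T3 : a2 + dB + c1 = Real.pi := by
    have := angle_add_angle_add_angle_eq_pi (p₁ := C) (p₂ := A) (p₃ := D) neCA.symm
    rwa [angle_comm C A D, angle_comm A D C, angle_comm D C A] at this
  -- the angle set
  set S := angleSet {A, B, C, D} with hSdef
  have hfin : S.Finite := by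
    have hPfin : ({A, B, C, D} : Set Pt).Finite := (Set.finite_singleton D).insert C
      |>.insert B |>.insert A
    apply Set.Finite.subset (Set.Finite.image
      (f := fun p : Pt × Pt × Pt => ∠ p.1 p.2.1 p.2.2) (hPfin.prod (hPfin.prod hPfin)))
    rintro θ ⟨_, x, hx, y, hy, z, hz, _, _, _, rfl⟩
    exact ⟨(x, y, z), ⟨hx, hy, hz⟩, rfl⟩
  have memA : A ∈ ({A, B, C, D} : Set Pt) := by simp
  have memB : B ∈ ({A, B, C, D} : Set Pt) := by simp
  have memC : C ∈ ({A, B, C, D} : Set Pt) := by simp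
  have memD : D ∈ ({A, B, C, D} : Set Pt) := by simp
  have Ma1 : a1 ∈ S := mem_angleSet memB memA memD s_BAD
  have Ma2 : a2 ∈ S := mem_angleSet memD memA memC s_DAC
  have Ma0 : a0 ∈ S := mem_angleSet memB memA memC s_BAC
  have Mb1 : b1 ∈ S := mem_angleSet memD memB memA s_DBA
  have Mb2 : b2 ∈ S := mem_angleSet memC memB memD s_CBD
  have Mb0 : b0 ∈ S := mem_angleSet memC memB memA s_CBA
  have Mc1 : c1 ∈ S := mem_angleSet memA memC memD s_ACD
  have Mc2 : c2 ∈ S := mem_angleSet memD memC memB s_DCB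
  have Mc0 : c0 ∈ S := mem_angleSet memA memC memB s_ACB
  have MdA : dA ∈ S := mem_angleSet memB memD memC s_BDC
  have MdB : dB ∈ S := mem_angleSet memC memD memA s_CDA
  have MdC : dC ∈ S := mem_angleSet memA memD memB s_ADB
  -- chains
  have ch1 : a1 < a0 := by linarith [Ia2.1]
  have ch2 : a0 < dA := by linarith [Ib1.1, Ic1.1]
  have hsub : ({a1, a0, dA} : Set ℝ) ⊆ S := by
    rintro v (rfl | rfl | rfl) <;> assumption
  have h3card : ({a1, a0, dA} : Set ℝ).ncard = 3 := by
    rw [Set.ncard_eq_three]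
    exact ⟨a1, a0, dA, ne_of_lt ch1, ne_of_lt (ch1.trans ch2), ne_of_lt ch2, rfl⟩
  have hSeq : ({a1, a0, dA} : Set ℝ) = S :=
    Set.eq_of_subset_of_ncard_le hsub (by rw [h3card]; exact hcount) hfin
  have inS : ∀ v, v ∈ S → v = a1 ∨ v = a0 ∨ v = dA := fun v hv => mem3 (hSeq ▸ hv)
  -- identify all angles
  have hb0' : b0 = a0 := by
    rcases inS b0 Mb0 with hv | hv | hv
    · exfalso
      rcases inS b1 Mb1 with hw | hw | hw <;> linarith [Ib1.1, Ib2.1]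
    · exact hv
    · exfalso
      rcases inS dB MdB with hw | hw | hw <;> linarith [Ia2.1, Ic1.1, Ib2.1, Ia1.1, Ic2.1]
  have hc0' : c0 = a0 := by
    rcases inS c0 Mc0 with hv | hv | hv
    · exfalso
      rcases inS c1 Mc1 with hw | hw | hw <;> linarith [Ic1.1, Ic2.1]
    · exact hv
    · exfalso
      rcases inS dC MdC with hw | hw | hw <;> linarith [Ia2.1, Ib2.1, Ia1.1, Ib1.1, Ic1.1]
  have ha2' : a2 = a1 := by
    rcases inS a2 Ma2 with hv | hv | hv
    · exact hv
    · linarith [Ia1.1]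
    · linarith [Ia1.1]
  have hb1' : b1 = a1 := by
    rcases inS b1 Mb1 with hv | hv | hv
    · exact hv
    · linarith [Ib2.1]
    · linarith [Ib2.1]
  have hb2' : b2 = a1 := by
    rcases inS b2 Mb2 with hv | hv | hv
    · exact hv
    · linarith [Ib1.1]
    · linarith [Ib1.1]
  have hc1' : c1 = a1 := by
    rcases inS c1 Mc1 with hv | hv | hv
    · exact hv
    · linarith [Ic2.1]
    · linarith [Ic2.1]
  have hc2' : c2 = a1 := by
    rcases inS c2 Mc2 with hv | hv | hv
    · exact hv
    · linarith [Ic1.1]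
    · linarith [Ic1.1]
  -- numerics
  have ha0pi : a0 = Real.pi / 3 := by linarith
  have ha1pi : a1 = Real.pi / 6 := by linarith
  have pi_pos := Real.pi_pos
  -- side equalities
  have dBA : dist B A = dist B C := by
    apply dist_eq_of_angle_eq_angle_of_angle_ne_pi (p₁ := B) (p₂ := A) (p₃ := C)
    · rw [show ∠ B C A = c0 from angle_comm B C A ▸ hc0def ▸ rfl]
      rw [← ha0def, hc0']
    · rw [show ∠ A B C = b0 from angle_comm A B C ▸ hb0def ▸ rfl]
      intro hh; rw [hb0'] at hh; linarith
  have dCB : dist C B = dist C A := by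
    apply dist_eq_of_angle_eq_angle_of_angle_ne_pi (p₁ := C) (p₂ := B) (p₃ := A)
    · rw [← hb0def, show ∠ C A B = a0 from angle_comm C A B ▸ ha0def ▸ rfl, hb0']
    · rw [show ∠ B C A = c0 from angle_comm B C A ▸ hc0def ▸ rfl]
      intro hh; rw [hc0'] at hh; linarith
  have e1 : dist A B = dist B C := (dist_comm A B).trans dBA
  have e2 : dist B C = dist C A := (dist_comm B C).trans dCB
  refine ⟨e1, e2, ?_⟩
  -- D is equidistant from the vertices
  have hDd1 : dist D A = dist D B := by
    apply dist_eq_of_angle_eq_angle_of_angle_ne_pi (p₁ := D) (p₂ := A) (p₃ := B)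
    · rw [show ∠ D A B = a1 from angle_comm D A B ▸ ha1def ▸ rfl, ← hb1def, hb1']
    · rw [← hdCdef]
      intro hh; linarith [T1, Ib1.1, Ia1.1, hh, hb1', ha1pi]
  have hDd2 : dist D B = dist D C := by
    apply dist_eq_of_angle_eq_angle_of_angle_ne_pi (p₁ := D) (p₂ := B) (p₃ := C)
    · rw [show ∠ D B C = b2 from angle_comm D B C ▸ hb2def ▸ rfl, ← hc2def, hb2', hc2']
    · rw [show ∠ B D C = dA from hdAdef ▸ rfl]
      intro hh; linarith [T2, Ic2.1, Ib2.1]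
  obtain ⟨g1, g2⟩ := centroid_dists e1 e2
  exact unique_equidist h hDd1 hDd2 g1 g2

set_option maxHeartbeats 2000000 in
theorem stmt8 (A B C D : Pt) (h : AffineIndependent ℝ ![A, B, C])
    (hD : D ∈ interior (convexHull ℝ ({A, B, C} : Set Pt)))
    (hcount : (angleSet {A, B, C, D}).ncard ≤ 3) :
    dist A B = dist B C ∧ dist B C = dist C A ∧ D = (3 : ℝ)⁻¹ • (A + B + C) := by
  have hncol : ¬ Collinear ℝ ({A, B, C} : Set Pt) := affineIndependent_iff_not_collinear_set.mp h
  have hs0 : (∡ B A C).sign ≠ 0 := by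
    intro h0
    rw [oangle_sign_eq_zero_iff_collinear] at h0
    exact hncol (by rwa [Set.insert_comm] at h0)
  by_cases h1 : (∡ B A C).sign = 1
  · exact key A B C D h hD hcount h1
  · have hneg : (∡ B A C).sign = -1 := by
      cases hv : (∡ B A C).sign with
      | zero => exact absurd (hv.trans (by decide)) hs0
      | neg => decide
      | pos => exact absurd (hv.trans (by decide)) h1
    have h2 : (∡ C A B).sign = 1 := by
      have hsw := oangle_swap₁₃_sign B A C
      rw [← hsw, hneg]; decide
    have hset : ({A, C, B} : Set Pt) = {A, B, C} :=
      congrArg (insert A) (Set.pair_comm C B)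
    have hset4 : ({A, C, B, D} : Set Pt) = {A, B, C, D} :=
      congrArg (insert A) (Set.insert_comm C B {D})
    have h' : AffineIndependent ℝ ![A, C, B] := by
      rw [affineIndependent_iff_not_collinear_set, hset]
      exact hncol
    have hD' : D ∈ interior (convexHull ℝ ({A, C, B} : Set Pt)) := by rwa [hset]
    have hcount' : (angleSet {A, C, B, D}).ncard ≤ 3 := by rwa [hset4]
    obtain ⟨f1, f2, f3⟩ := key A C B D h' hD' hcount' h2
    refine ⟨?_, ?_, ?_⟩
    · rw [dist_comm A B, dist_comm B C]
      exact f2.symm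
    · rw [dist_comm B C, dist_comm C A]
      exact f1.symm
    · rw [f3]; congr 1; abel
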